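/- Let Λ ⊂ ℝⁿ be a lattice, A ⪰ 0 with Λ ⊂ ran(A), and t ≥ 1. Then ρ_{A/t²}(Λ \ {0}) ≤ ρ_A(Λ \ {0}) / ⌊t⌋. -/

import Mathlib

open Real Matrix

/-- `Ap` is the Moore–Penrose pseudoinverse of `A`. -/
def IsMoorePenrose {n : ℕ} (A Ap : Matrix (Fin n) (Fin n) ℝ) : Prop :=
  A * Ap * A = A ∧ Ap * A * Ap = Ap ∧ (A * Ap)ᵀ = A * Ap ∧ (Ap * A)ᵀ = Ap * A

/-- The point of the `d`-dimensional lattice with basis matrix `C` given by `z : ℤᵈ`. -/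
noncomputable def latPt {n d : ℕ} (C : Matrix (Fin n) (Fin d) ℝ) (z : Fin d → ℤ) : Fin n → ℝ :=
  C.mulVec fun i => (z i : ℝ)

private lemma mp_unique {n : ℕ} {M B B' : Matrix (Fin n) (Fin n) ℝ}
    (h : IsMoorePenrose M B) (h' : IsMoorePenrose M B') : B = B' := by
  obtain ⟨h1, h2, h3, h4⟩ := h
  obtain ⟨h1', h2', h3', h4'⟩ := h'
  have e1 : M * B = M * B' := by
    calc M * B = (M * B)ᵀ := h3.symm
    _ = Bᵀ * Mᵀ := Matrix.transpose_mul _ _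
    _ = Bᵀ * (M * B' * M)ᵀ := by rw [h1']
    _ = Bᵀ * (Mᵀ * (M * B')ᵀ) := by rw [Matrix.transpose_mul (M * B') M]
    _ = Bᵀ * (Mᵀ * (M * B')) := by rw [h3']
    _ = (Bᵀ * Mᵀ) * (M * B') := by rw [mul_assoc]
    _ = (M * B)ᵀ * (M * B') := by rw [Matrix.transpose_mul]
    _ = (M * B) * (M * B') := by rw [h3]
    _ = (M * B * M) * B' := by simp only [mul_assoc]
    _ = M * B' := by rw [h1]
  have e2 : B * M = B' * M := by
    calc B * M = (B * M)ᵀ := h4.symm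
    _ = Mᵀ * Bᵀ := Matrix.transpose_mul _ _
    _ = (M * B' * M)ᵀ * Bᵀ := by rw [h1']
    _ = ((M * (B' * M))ᵀ) * Bᵀ := by rw [mul_assoc]
    _ = ((B' * M)ᵀ * Mᵀ) * Bᵀ := by rw [Matrix.transpose_mul M (B' * M)]
    _ = ((B' * M) * Mᵀ) * Bᵀ := by rw [h4']
    _ = (B' * M) * (Mᵀ * Bᵀ) := by rw [mul_assoc]
    _ = (B' * M) * (B * M)ᵀ := by rw [Matrix.transpose_mul]
    _ = (B' * M) * (B * M) := by rw [h4]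
    _ = B' * (M * B * M) := by simp only [mul_assoc]
    _ = B' * M := by rw [h1]
  calc B = B * M * B := h2.symm
  _ = B' * M * B := by rw [e2]
  _ = B' * (M * B) := by rw [mul_assoc]
  _ = B' * (M * B') := by rw [e1]
  _ = B' * M * B' := by rw [mul_assoc]
  _ = B' := h2'

private lemma summable_gauss_nat {a : ℝ} (ha : 0 < a) :
    Summable fun m : ℕ => Real.exp (-a * (m : ℝ) ^ 2) := by
  refine Summable.of_nonneg_of_le (fun m => (Real.exp_pos _).le) (fun m => ?_)
    (Real.summable_exp_nat_mul_iff.mpr (neg_lt_zero.mpr ha))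
  rw [Real.exp_le_exp]
  have h1 : (m : ℝ) ≤ (m : ℝ) ^ 2 := by
    exact_mod_cast Nat.le_self_pow two_ne_zero m
  nlinarith

private lemma summable_gauss_int {a : ℝ} (ha : 0 < a) :
    Summable fun m : ℤ => Real.exp (-a * (m : ℝ) ^ 2) := by
  apply Summable.of_nat_of_neg_add_one
  · exact (summable_gauss_nat ha).congr (fun m => by push_cast; ring_nf)
  · refine ((summable_gauss_nat ha).comp_injective Nat.succ_injective).congr (fun m => ?_)
    show Real.exp (-a * ((m + 1 : ℕ) : ℝ) ^ 2) = _
    push_cast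
    ring_nf

private lemma summable_gauss_pi {a : ℝ} (ha : 0 < a) (d : ℕ) :
    Summable fun z : Fin d → ℤ => Real.exp (-a * ∑ i, ((z i : ℝ)) ^ 2) := by
  induction d with
  | zero => exact Summable.of_finite
  | succ d ih =>
    rw [← (Fin.consEquiv (fun _ : Fin (d + 1) => ℤ)).summable_iff]
    have h : Summable fun q : ℤ × (Fin d → ℤ) =>
        Real.exp (-a * (q.1 : ℝ) ^ 2) * Real.exp (-a * ∑ i, ((q.2 i : ℝ)) ^ 2) :=
      (summable_gauss_int ha).mul_of_nonneg ih
        (fun _ => (Real.exp_pos _).le) (fun _ => (Real.exp_pos _).le)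
    refine h.congr (fun q => ?_)
    obtain ⟨x, y⟩ := q
    simp only [Fin.consEquiv, Equiv.coe_fn_mk, Function.comp_apply]
    rw [← Real.exp_add, Fin.sum_univ_succ]
    simp only [Fin.cons_zero, Fin.cons_succ]
    ring_nf

private lemma core {d : ℕ} (Q : (Fin d → ℤ) → ℝ)
    (hQ0 : ∀ z, 0 ≤ Q z)
    (hQsmul : ∀ (c : ℤ) (w : Fin d → ℤ), Q (c • w) = (c : ℝ) ^ 2 * Q w)
    (hsum : Summable fun z : {z : Fin d → ℤ // z ≠ 0} => Real.exp (-π * Q z.1))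
    (t : ℝ) (ht : 1 ≤ t) :
    (∑' z : {z : Fin d → ℤ // z ≠ 0}, Real.exp (-π * (t ^ 2 * Q z.1))) ≤
      (∑' z : {z : Fin d → ℤ // z ≠ 0}, Real.exp (-π * Q z.1)) / (⌊t⌋ : ℝ) := by
  classical
  have hfl : (1 : ℤ) ≤ ⌊t⌋ := Int.le_floor.mpr (by exact_mod_cast ht)
  set k : ℤ := ⌊t⌋ with hk
  have hk0 : (0 : ℤ) < k := lt_of_lt_of_le zero_lt_one hfl
  have hkt : (k : ℝ) ≤ t := Int.floor_le t
  set T := {z : Fin d → ℤ // z ≠ 0} with hT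
  -- gcd and primitive part
  have hgcd_pos : ∀ z : T, 0 < Finset.univ.gcd z.1 := by
    intro z
    have h0 : Finset.univ.gcd z.1 ≠ 0 := by
      intro h
      apply z.2
      funext i
      exact Finset.gcd_eq_zero_iff.mp h i (Finset.mem_univ i)
    have h1 : 0 ≤ Finset.univ.gcd z.1 :=
      Int.nonneg_of_normalize_eq_self Finset.normalize_gcd
    exact lt_of_le_of_ne h1 (Ne.symm h0)
  set m : T → ℤ := fun z => Finset.univ.gcd z.1 with hm
  set p : T → (Fin d → ℤ) := fun z => fun i => z.1 i / m z with hp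
  have hmp : ∀ z : T, (m z) • p z = z.1 := by
    intro z; funext i
    exact Int.mul_ediv_cancel' (Finset.gcd_dvd (Finset.mem_univ i))
  have hp0 : ∀ z : T, p z ≠ 0 := by
    intro z h
    apply z.2
    rw [← hmp z, h, smul_zero]
  have hpgcd : ∀ z : T, Finset.univ.gcd (p z) = 1 := by
    intro z
    obtain ⟨i, hi⟩ := Function.ne_iff.mp z.2
    exact Finset.gcd_div_eq_one (Finset.mem_univ i) (by simpa using hi)
  have hgcd_smul : ∀ (M : ℤ), 0 ≤ M → ∀ (w : Fin d → ℤ),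
      Finset.univ.gcd (M • w) = M * Finset.univ.gcd w := by
    intro M hM w
    have h : (M • w) = fun i => M * w i := rfl
    rw [h, Finset.gcd_mul_left, Int.normalize_of_nonneg hM]
  -- the injection
  set K : ℕ := k.toNat with hKdef
  have hKk : (K : ℤ) = k := Int.toNat_of_nonneg hk0.le
  have hKpos : 0 < K := by omega
  have hMpos : ∀ (j : Fin K) (z : T), 0 < k * m z - (j : ℤ) := by
    intro j z
    have h1 : (j : ℤ) < k := by rw [← hKk]; exact_mod_cast j.isLt
    have h2 : 1 ≤ m z := hgcd_pos z
    nlinarith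
  set ψ : Fin K × T → T := fun q =>
    ⟨(k * m q.2 - (q.1 : ℤ)) • p q.2, by
      intro h
      rcases smul_eq_zero.mp h with h' | h'
      exacts [(hMpos q.1 q.2).ne' h', hp0 q.2 h']⟩ with hψ
  have hψval : ∀ q : Fin K × T, (ψ q).1 = (k * m q.2 - (q.1 : ℤ)) • p q.2 := fun q => rfl
  have hψgcd : ∀ q : Fin K × T, m (ψ q) = k * m q.2 - (q.1 : ℤ) := by
    intro q
    show Finset.univ.gcd (ψ q).1 = _
    rw [hψval, hgcd_smul _ (hMpos q.1 q.2).le, hpgcd, mul_one]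
  have hψp : ∀ q : Fin K × T, p (ψ q) = p q.2 := by
    intro q; funext i
    show (ψ q).1 i / m (ψ q) = p q.2 i
    rw [hψgcd, hψval]
    show ((k * m q.2 - (q.1 : ℤ)) * p q.2 i) / _ = _
    exact Int.mul_ediv_cancel_left _ (hMpos q.1 q.2).ne'
  have hψinj : Function.Injective ψ := by
    rintro ⟨j₁, z₁⟩ ⟨j₂, z₂⟩ h
    have hM : k * m z₁ - (j₁ : ℤ) = k * m z₂ - (j₂ : ℤ) := by
      have h2 := congrArg m h
      rwa [hψgcd ⟨j₁, z₁⟩, hψgcd ⟨j₂, z₂⟩] at h2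
    have hpe : p z₁ = p z₂ := by
      have h2 := congrArg p h
      rwa [hψp ⟨j₁, z₁⟩, hψp ⟨j₂, z₂⟩] at h2
    have hj : (j₁ : ℤ) = (j₂ : ℤ) := by
      have hdvd : k ∣ ((j₁ : ℤ) - (j₂ : ℤ)) := ⟨m z₁ - m z₂, by rw [mul_sub]; linarith⟩
      have hb1 : (j₁ : ℤ) < k := by rw [← hKk]; exact_mod_cast j₁.isLt
      have hb2 : (j₂ : ℤ) < k := by rw [← hKk]; exact_mod_cast j₂.isLt
      have hnn1 : (0 : ℤ) ≤ (j₁ : ℤ) := by positivity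
      have hnn2 : (0 : ℤ) ≤ (j₂ : ℤ) := by positivity
      have habs : |(j₁ : ℤ) - (j₂ : ℤ)| < k := abs_lt.mpr ⟨by linarith, by linarith⟩
      have h0 := Int.eq_zero_of_abs_lt_dvd hdvd habs
      linarith
    have hjj : j₁ = j₂ := by
      apply Fin.ext
      exact_mod_cast hj
    have hmm : m z₁ = m z₂ := by
      have h2 : k * m z₁ = k * m z₂ := by linarith
      exact mul_left_cancel₀ hk0.ne' h2
    have hz : z₁ = z₂ := by
      apply Subtype.ext
      rw [← hmp z₁, ← hmp z₂, hmm, hpe]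
    rw [hjj, hz]
  -- key pointwise bound
  have key : ∀ (j : Fin K) (z : T),
      Real.exp (-π * (t ^ 2 * Q z.1)) ≤ Real.exp (-π * Q (ψ (j, z)).1) := by
    intro j z
    rw [Real.exp_le_exp]
    have h1 : Q (ψ (j, z)).1 = ((k * m z - (j : ℤ) : ℤ) : ℝ) ^ 2 * Q (p z) := by
      rw [hψval]; exact hQsmul _ _
    have h2 : Q z.1 = ((m z : ℤ) : ℝ) ^ 2 * Q (p z) := by
      conv_lhs => rw [← hmp z]
      exact hQsmul _ _
    have h3 : 0 ≤ Q (p z) := hQ0 _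
    have hco : (0 : ℝ) < ((k * m z - (j : ℤ) : ℤ) : ℝ) := by exact_mod_cast hMpos j z
    have hm1 : (1 : ℝ) ≤ ((m z : ℤ) : ℝ) := by exact_mod_cast hgcd_pos z
    have hle : ((k * m z - (j : ℤ) : ℤ) : ℝ) ≤ t * ((m z : ℤ) : ℝ) := by
      have hstep : ((k * m z - (j : ℤ) : ℤ) : ℝ) ≤ ((k * m z : ℤ) : ℝ) := by
        have : (0 : ℤ) ≤ (j : ℤ) := by positivity
        exact_mod_cast sub_le_self _ this
      push_cast at hstep ⊢
      nlinarith
    have hsq : ((k * m z - (j : ℤ) : ℤ) : ℝ) ^ 2 ≤ (t * ((m z : ℤ) : ℝ)) ^ 2 :=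
      pow_le_pow_left₀ hco.le hle 2
    have h4 : ((k * m z - (j : ℤ) : ℤ) : ℝ) ^ 2 * Q (p z) ≤
        (t * ((m z : ℤ) : ℝ)) ^ 2 * Q (p z) := mul_le_mul_of_nonneg_right hsq h3
    rw [h1, h2]
    have h5 := mul_le_mul_of_nonneg_left h4 Real.pi_pos.le
    nlinarith [h5]
  -- summability
  have hsumψ : Summable ((fun z : T => Real.exp (-π * Q z.1)) ∘ ψ) :=
    hsum.comp_injective hψinj
  have hsumψ' : Summable (fun q : Fin K × T => Real.exp (-π * Q (ψ q).1)) := hsumψ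
  have hsum_each : ∀ j : Fin K, Summable (fun z : T => Real.exp (-π * Q (ψ (j, z)).1)) := by
    intro j
    exact hsumψ.comp_injective (f := (fun z : T => Real.exp (-π * Q z.1)) ∘ ψ)
      (i := fun z : T => (j, z)) (fun a b hab => congrArg Prod.snd hab)
  have hsumL : Summable (fun z : T => Real.exp (-π * (t ^ 2 * Q z.1))) := by
    refine Summable.of_nonneg_of_le (fun z => (Real.exp_pos _).le)
      (fun z => key ⟨0, hKpos⟩ z) (hsum_each ⟨0, hKpos⟩)
  -- chain of inequalities
  have step1 : (K : ℝ) * ∑' z : T, Real.exp (-π * (t ^ 2 * Q z.1)) =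
      ∑' z : T, ∑ _j : Fin K, Real.exp (-π * (t ^ 2 * Q z.1)) := by
    rw [← tsum_mul_left]
    congr 1
    funext z
    rw [Finset.sum_const, Finset.card_univ, Fintype.card_fin, nsmul_eq_mul]
  have step2 : (∑' z : T, ∑ _j : Fin K, Real.exp (-π * (t ^ 2 * Q z.1))) ≤
      ∑' z : T, ∑ j : Fin K, Real.exp (-π * Q (ψ (j, z)).1) := by
    refine Summable.tsum_le_tsum (fun z => Finset.sum_le_sum (fun j _ => key j z)) ?_ ?_
    · exact summable_sum (fun j _ => hsumL)
    · exact summable_sum (fun j _ => hsum_each j)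
  have step3 : (∑' z : T, ∑ j : Fin K, Real.exp (-π * Q (ψ (j, z)).1)) =
      ∑ j : Fin K, ∑' z : T, Real.exp (-π * Q (ψ (j, z)).1) :=
    Summable.tsum_finsetSum (fun j _ => hsum_each j)
  have step4 : (∑ j : Fin K, ∑' z : T, Real.exp (-π * Q (ψ (j, z)).1)) =
      ∑' q : Fin K × T, Real.exp (-π * Q (ψ q).1) := by
    rw [Summable.tsum_prod' hsumψ' (fun j => hsum_each j), tsum_fintype]
  have step5 : (∑' q : Fin K × T, Real.exp (-π * Q (ψ q).1)) ≤
      ∑' z : T, Real.exp (-π * Q z.1) :=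
    Summable.tsum_le_tsum_of_inj ψ hψinj (fun c _ => (Real.exp_pos _).le)
      (fun q => le_of_eq rfl) hsumψ hsum
  have hfinal : (K : ℝ) * ∑' z : T, Real.exp (-π * (t ^ 2 * Q z.1)) ≤
      ∑' z : T, Real.exp (-π * Q z.1) := by
    rw [step1]
    calc _ ≤ _ := step2
    _ = _ := step3
    _ = _ := step4
    _ ≤ _ := step5
  have hKR : (0 : ℝ) < (K : ℝ) := by exact_mod_cast hKpos
  have hcast : ((⌊t⌋ : ℤ) : ℝ) = (K : ℝ) := by rw [← hk, ← hKk]; exact Int.cast_natCast K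
  rw [hcast, le_div_iff₀ hKR]
  linarith

private lemma coercive {d : ℕ} (hd : 0 < d) (F : (Fin d → ℝ) → ℝ)
    (hcont : Continuous F)
    (hF0 : ∀ v, 0 ≤ F v)
    (hFzero : ∀ v, F v = 0 → v = 0)
    (hsmul : ∀ (s : ℝ) (w : Fin d → ℝ), F (s • w) = s ^ 2 * F w) :
    ∃ c > 0, ∀ v : Fin d → ℝ, c * ∑ i, v i ^ 2 ≤ F v := by
  haveI : Nonempty (Fin d) := ⟨⟨0, hd⟩⟩
  obtain ⟨v₀, hv₀S, hmin⟩ := (isCompact_sphere (0 : Fin d → ℝ) 1).exists_isMinOn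
    (NormedSpace.sphere_nonempty.mpr zero_le_one) hcont.continuousOn
  have hv₀min : ∀ w ∈ Metric.sphere (0 : Fin d → ℝ) 1, F v₀ ≤ F w :=
    fun w hw => isMinOn_iff.mp hmin w hw
  have hv₀n : ‖v₀‖ = 1 := mem_sphere_zero_iff_norm.mp hv₀S
  have hv₀ne : v₀ ≠ 0 := by
    intro h
    rw [h, norm_zero] at hv₀n
    exact zero_ne_one hv₀n
  have hc₀ : 0 < F v₀ :=
    lt_of_le_of_ne (hF0 v₀) (fun h => hv₀ne (hFzero v₀ h.symm))
  have hdR : (0 : ℝ) < (d : ℝ) := by exact_mod_cast hd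
  refine ⟨F v₀ / d, by positivity, ?_⟩
  intro v
  rcases eq_or_ne v 0 with rfl | hv
  · have hF00 : F 0 = 0 := by
      have := hsmul 0 0
      simpa using this
    simp [hF00]
  · have hnv : 0 < ‖v‖ := norm_pos_iff.mpr hv
    have hw : ‖v‖⁻¹ • v ∈ Metric.sphere (0 : Fin d → ℝ) 1 := by
      rw [mem_sphere_zero_iff_norm, norm_smul, norm_inv, norm_norm, inv_mul_cancel₀ hnv.ne']
    have h1 : F v₀ ≤ F (‖v‖⁻¹ • v) := hv₀min _ hw
    have h2 : F v = ‖v‖ ^ 2 * F (‖v‖⁻¹ • v) := by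
      rw [hsmul]
      field_simp
    have h3 : ∑ i, v i ^ 2 ≤ (d : ℝ) * ‖v‖ ^ 2 := by
      calc ∑ i, v i ^ 2 ≤ ∑ _i : Fin d, ‖v‖ ^ 2 := by
            refine Finset.sum_le_sum (fun i _ => ?_)
            have habs : |v i| ≤ ‖v‖ := by
              rw [← Real.norm_eq_abs]
              exact norm_le_pi_norm v i
            exact sq_le_sq' (abs_le.mp habs).1 (abs_le.mp habs).2
      _ = (d : ℝ) * ‖v‖ ^ 2 := by
            rw [Finset.sum_const, Finset.card_univ, Fintype.card_fin, nsmul_eq_mul]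
    calc (F v₀ / d) * ∑ i, v i ^ 2 ≤ (F v₀ / d) * ((d : ℝ) * ‖v‖ ^ 2) := by
          exact mul_le_mul_of_nonneg_left h3 (by positivity)
    _ = F v₀ * ‖v‖ ^ 2 := by field_simp
    _ ≤ F (‖v‖⁻¹ • v) * ‖v‖ ^ 2 := mul_le_mul_of_nonneg_right h1 (by positivity)
    _ = F v := by rw [h2]; ring

/-- For a lattice `Λ ⊆ ran(A)` with `A ⪰ 0` and `t ≥ 1`,
`ρ_{A/t²}(Λ \ {0}) ≤ ρ_A(Λ \ {0}) / ⌊t⌋`. -/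
theorem stmt2 {n d : ℕ} (C : Matrix (Fin n) (Fin d) ℝ)
    (hC : LinearIndependent ℝ fun j : Fin d => fun i => C i j)
    (A Ap Ap' : Matrix (Fin n) (Fin n) ℝ) (hA : A.PosSemidef)
    (hAp : IsMoorePenrose A Ap)
    (t : ℝ) (ht : 1 ≤ t)
    (hAp' : IsMoorePenrose ((t ^ 2)⁻¹ • A) Ap')
    (hran : ∀ z : Fin d → ℤ, latPt C z ∈ Set.range A.mulVec) :
    (∑' z : {z : Fin d → ℤ // z ≠ 0},
        Real.exp (-π * (latPt C z.1 ⬝ᵥ Ap'.mulVec (latPt C z.1)))) ≤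
      (∑' z : {z : Fin d → ℤ // z ≠ 0},
        Real.exp (-π * (latPt C z.1 ⬝ᵥ Ap.mulVec (latPt C z.1)))) / (⌊t⌋ : ℝ) := by
  classical
  rcases Nat.eq_zero_or_pos d with hd0 | hd
  · subst hd0
    haveI : IsEmpty {z : Fin 0 → ℤ // z ≠ 0} :=
      ⟨fun z => z.2 (Subsingleton.elim _ _)⟩
    rw [tsum_empty, tsum_empty]
    simp
  · have ht0 : (0 : ℝ) < t := lt_of_lt_of_le one_pos ht
    have hs : t ^ 2 ≠ 0 := by positivity
    have hAt : Aᵀ = A := by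
      ext i j
      have h := congrFun (congrFun hA.1 i) j
      simpa [Matrix.conjTranspose_apply] using h
    obtain ⟨g1, g2, g3, g4⟩ := hAp
    have hApT : IsMoorePenrose A Apᵀ := by
      refine ⟨?_, ?_, ?_, ?_⟩
      · have h : A * Apᵀ * A = (Aᵀ * Ap * Aᵀ)ᵀ := by
          simp [Matrix.transpose_mul, Matrix.transpose_transpose, mul_assoc]
        rw [h, hAt, g1, hAt]
      · have h : Apᵀ * A * Apᵀ = (Ap * Aᵀ * Ap)ᵀ := by
          simp [Matrix.transpose_mul, Matrix.transpose_transpose, mul_assoc]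
        rw [h, hAt, g2]
      · calc (A * Apᵀ)ᵀ = Ap * Aᵀ := by simp [Matrix.transpose_mul]
        _ = Ap * A := by rw [hAt]
        _ = (Ap * A)ᵀ := g4.symm
        _ = Aᵀ * Apᵀ := by simp [Matrix.transpose_mul]
        _ = A * Apᵀ := by rw [hAt]
      · calc (Apᵀ * A)ᵀ = Aᵀ * Ap := by simp [Matrix.transpose_mul]
        _ = A * Ap := by rw [hAt]
        _ = (A * Ap)ᵀ := g3.symm
        _ = Apᵀ * Aᵀ := by simp [Matrix.transpose_mul]
        _ = Apᵀ * A := by rw [hAt]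
    have hApsym : Apᵀ = Ap := mp_unique hApT ⟨g1, g2, g3, g4⟩
    have e : ((t ^ 2)⁻¹ • A) * ((t ^ 2) • Ap) = A * Ap := by
      rw [Matrix.smul_mul, Matrix.mul_smul, smul_smul, inv_mul_cancel₀ hs, one_smul]
    have e' : ((t ^ 2) • Ap) * ((t ^ 2)⁻¹ • A) = Ap * A := by
      rw [Matrix.smul_mul, Matrix.mul_smul, smul_smul, mul_inv_cancel₀ hs, one_smul]
    have hMP2 : IsMoorePenrose ((t ^ 2)⁻¹ • A) ((t ^ 2) • Ap) := by
      refine ⟨?_, ?_, ?_, ?_⟩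
      · rw [e, Matrix.mul_smul, g1]
      · rw [e', Matrix.mul_smul, g2]
      · rw [e]; exact g3
      · rw [e']; exact g4
    have hAp'eq : Ap' = (t ^ 2) • Ap := mp_unique hAp' hMP2
    rw [hAp'eq]
    simp only [Matrix.smul_mulVec, dotProduct_smul, smul_eq_mul]
    -- properties of the quadratic form
    have hcol : ∀ j : Fin d, ∃ x, A *ᵥ x = fun r => C r j := by
      intro j
      obtain ⟨x, hx⟩ := hran (Pi.single j 1)
      refine ⟨x, ?_⟩
      rw [hx]
      show C *ᵥ (fun i => (((Pi.single j 1 : Fin d → ℤ)) i : ℝ)) = _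
      have hcast : (fun i => (((Pi.single j 1 : Fin d → ℤ)) i : ℝ)) = Pi.single j (1 : ℝ) := by
        funext i
        rcases eq_or_ne i j with rfl | hij
        · simp
        · simp [Pi.single_apply, hij]
      rw [hcast, Matrix.mulVec_single]
      funext r; simp
    have hrange : ∀ v : Fin d → ℝ, ∃ u, A *ᵥ u = C *ᵥ v := by
      intro v
      choose x hx using hcol
      refine ⟨fun r => ∑ j, v j * x j r, ?_⟩
      funext r
      simp only [Matrix.mulVec, dotProduct]
      simp_rw [Finset.mul_sum]
      rw [Finset.sum_comm]
      refine Finset.sum_congr rfl fun j _ => ?_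
      have hxj := congrFun (hx j) r
      simp only [Matrix.mulVec, dotProduct] at hxj
      calc ∑ s, A r s * (v j * x j s) = v j * ∑ s, A r s * x j s := by
            rw [Finset.mul_sum]; exact Finset.sum_congr rfl fun s _ => by ring
      _ = v j * C r j := by rw [hxj]
      _ = C r j * v j := by ring
    have hFrep : ∀ (v : Fin d → ℝ) (u : Fin n → ℝ), A *ᵥ u = C *ᵥ v →
        (C *ᵥ v) ⬝ᵥ Ap *ᵥ (C *ᵥ v) = u ⬝ᵥ A *ᵥ u := by
      intro v u hu
      rw [← hu, Matrix.mulVec_mulVec]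
      calc (A *ᵥ u) ⬝ᵥ (Ap * A) *ᵥ u
          = (u ᵥ* Aᵀ) ⬝ᵥ (Ap * A) *ᵥ u := by rw [Matrix.vecMul_transpose]
      _ = u ⬝ᵥ Aᵀ *ᵥ ((Ap * A) *ᵥ u) := (Matrix.dotProduct_mulVec _ _ _).symm
      _ = u ⬝ᵥ (Aᵀ * (Ap * A)) *ᵥ u := by rw [Matrix.mulVec_mulVec]
      _ = u ⬝ᵥ A *ᵥ u := by rw [hAt, ← mul_assoc, g1]
    have hF0 : ∀ v : Fin d → ℝ, 0 ≤ (C *ᵥ v) ⬝ᵥ Ap *ᵥ (C *ᵥ v) := by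
      intro v
      obtain ⟨u, hu⟩ := hrange v
      rw [hFrep v u hu]
      simpa using hA.dotProduct_mulVec_nonneg u
    have hCinj : ∀ v : Fin d → ℝ, C *ᵥ v = 0 → v = 0 := by
      intro v hv
      have hli := Fintype.linearIndependent_iff.mp hC v
      have hzero : ∑ j, v j • (fun i => C i j) = 0 := by
        funext i
        simp only [Finset.sum_apply, Pi.smul_apply, smul_eq_mul, Pi.zero_apply]
        have h := congrFun hv i
        simp only [Matrix.mulVec, dotProduct, Pi.zero_apply] at h
        rw [← h]
        exact Finset.sum_congr rfl fun j _ => by ring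
      funext i
      exact hli hzero i
    have hFzero : ∀ v : Fin d → ℝ, (C *ᵥ v) ⬝ᵥ Ap *ᵥ (C *ᵥ v) = 0 → v = 0 := by
      intro v hv
      obtain ⟨u, hu⟩ := hrange v
      rw [hFrep v u hu] at hv
      have h0 : A *ᵥ u = 0 := (hA.dotProduct_mulVec_zero_iff u).mp (by simpa using hv)
      apply hCinj
      rw [← hu, h0]
    have hFsmul : ∀ (s : ℝ) (w : Fin d → ℝ),
        (C *ᵥ (s • w)) ⬝ᵥ Ap *ᵥ (C *ᵥ (s • w)) = s ^ 2 * ((C *ᵥ w) ⬝ᵥ Ap *ᵥ (C *ᵥ w)) := by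
      intro s w
      simp only [Matrix.mulVec_smul, smul_dotProduct, dotProduct_smul,
        smul_eq_mul]
      ring
    have hFcont : Continuous fun v : Fin d → ℝ => (C *ᵥ v) ⬝ᵥ Ap *ᵥ (C *ᵥ v) := by
      have h1 : ∀ (k : ℕ) (M : Matrix (Fin k) (Fin d) ℝ) (i : Fin k),
          Continuous fun v : Fin d → ℝ => (M *ᵥ v) i := by
        intro k M i
        simp only [Matrix.mulVec, dotProduct]
        exact continuous_finset_sum _ fun j _ => continuous_const.mul (continuous_apply j)
      have h2 : (fun v : Fin d → ℝ => (C *ᵥ v) ⬝ᵥ Ap *ᵥ (C *ᵥ v)) =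
          fun v => ∑ i, (C *ᵥ v) i * ((Ap * C) *ᵥ v) i := by
        funext v
        rw [Matrix.mulVec_mulVec]
        rfl
      rw [h2]
      exact continuous_finset_sum _ fun i _ => (h1 _ C i).mul (h1 _ (Ap * C) i)
    obtain ⟨c, hc, hcoer⟩ := coercive hd _ hFcont hF0 hFzero hFsmul
    have hlat : ∀ z : Fin d → ℤ, latPt C z = C *ᵥ (fun i => (z i : ℝ)) := fun z => rfl
    have hsum : Summable fun z : {z : Fin d → ℤ // z ≠ 0} =>
        Real.exp (-π * (latPt C z.1 ⬝ᵥ Ap *ᵥ latPt C z.1)) := by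
      have hg : Summable fun z : Fin d → ℤ => Real.exp (-(π * c) * ∑ i, ((z i : ℝ)) ^ 2) :=
        summable_gauss_pi (by positivity) d
      have hgs := hg.subtype {z : Fin d → ℤ | z ≠ 0}
      refine Summable.of_nonneg_of_le (fun z => (Real.exp_pos _).le) (fun z => ?_) hgs
      simp only [Function.comp_apply]
      rw [Real.exp_le_exp]
      have hco := hcoer (fun i => (z.1 i : ℝ))
      rw [hlat]
      nlinarith [Real.pi_pos, mul_le_mul_of_nonneg_left hco Real.pi_pos.le]
    have hQsmul : ∀ (a : ℤ) (w : Fin d → ℤ),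
        (latPt C (a • w) ⬝ᵥ Ap *ᵥ latPt C (a • w)) =
          (a : ℝ) ^ 2 * (latPt C w ⬝ᵥ Ap *ᵥ latPt C w) := by
      intro a w
      have hcast : (fun i => (((a • w) i : ℤ) : ℝ)) = (a : ℝ) • (fun i => ((w i : ℤ) : ℝ)) := by
        funext i
        show (((a • w) i : ℤ) : ℝ) = (a : ℝ) * ((w i : ℤ) : ℝ)
        have : (a • w) i = a * w i := rfl
        rw [this]
        push_cast
        ring
      have hls : latPt C (a • w) = (a : ℝ) • latPt C w := by
        rw [hlat, hlat, hcast, Matrix.mulVec_smul]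
      rw [hls]
      simp only [Matrix.mulVec_smul, smul_dotProduct, dotProduct_smul, smul_eq_mul]
      ring
    have hQ0 : ∀ z : Fin d → ℤ, 0 ≤ latPt C z ⬝ᵥ Ap *ᵥ latPt C z := fun z => by
      rw [hlat]; exact hF0 _
    exact core (fun z => latPt C z ⬝ᵥ Ap *ᵥ latPt C z) hQ0 hQsmul hsum t ht
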